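/- Let d : (0,2) → ℝ satisfy d(γ) ≥ 2 for all γ ∈ (0,2). Assume: (i) for all γ₁, γ₂ ∈ (0,2), if γ₁/d(γ₁) ≤ γ₂/d(γ₂), then 1 − 2/d(γ₁) − γ₁²/(2·d(γ₁)) + γ₁²/(2·d(γ₁)²) ≤ 1 − 2/d(γ₂) − γ₂²/(2·d(γ₂)) + γ₂²/(2·d(γ₂)²); (ii) for all γ₁, γ₂ ∈ (0,2), if γ₁/d(γ₁) = γ₂/d(γ₂), then 1 − 2/d(γ₁) − γ₁²/(2·d(γ₁)) = 1 − 2/d(γ₂) − γ₂²/(2·d(γ₂)). Then the function γ ↦ γ/d(γ) is strictly increasing on (0,2), and the function γ ↦ 1 − 2/d(γ) − γ²/(2·d(γ)) + γ²/(2·d(γ)²) is nondecreasing on (0,2). -/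

import Mathlib

/-- Injectivity step: if the exponent equality holds and `γ₁/d₁ = γ₂/d₂`, then `γ₁ = γ₂`. -/
lemma lqg_aux_inj {a b da db : ℝ} (ha : a ∈ Set.Ioo (0:ℝ) 2) (hb : b ∈ Set.Ioo (0:ℝ) 2)
    (hda : 2 ≤ da) (hdb : 2 ≤ db) (hxi : a / da = b / db)
    (hE : 1 - 2 / da - a ^ 2 / (2 * da) = 1 - 2 / db - b ^ 2 / (2 * db)) : a = b := by
  obtain ⟨ha0, ha2⟩ := ha
  obtain ⟨hb0, hb2⟩ := hb
  have hda0 : (0:ℝ) < da := by linarith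
  have hdb0 : (0:ℝ) < db := by linarith
  have h1 : a * db - b * da = 0 := by
    field_simp at hxi; linarith
  have h2' : da * db * (4 * db + a ^ 2 * db - 4 * da - b ^ 2 * da) = 0 := by
    field_simp at hE; linear_combination (-da * db) * hE
  have h2 : 4 * db + a ^ 2 * db - 4 * da - b ^ 2 * da = 0 := by
    rcases mul_eq_zero.mp h2' with h | h
    · rcases mul_eq_zero.mp h with h | h <;> linarith
    · exact h
  have key : (b - a) * (4 - a * b) * da = 0 := by linear_combination a * h2 - (4 + a ^ 2) * h1
  have hab4 : 4 - a * b > 0 := by nlinarith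
  have := mul_eq_zero.mp key
  rcases this with h | h
  · rcases mul_eq_zero.mp h with h | h
    · linarith
    · linarith
  · linarith

/-- Numeric contradiction at the heart of the no-crossing step. -/
lemma lqg_aux_num {s t fx fy : ℝ} (hs0 : 0 < s) (hst : s < t) (ht1 : t < 1)
    (hfy2 : 2 ≤ fy) (hfxy : fx < fy)
    (hE : 1 - s * fx + s ^ 2 / 2 ≤ 1 - t * fy + t ^ 2 / 2) : False := by
  nlinarith [mul_lt_mul_of_pos_left hfxy hs0,
    mul_le_mul_of_nonneg_left hfy2 (le_of_lt (sub_pos.mpr hst)),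
    mul_lt_mul_of_pos_left (show t + s < 2 by linarith) (sub_pos.mpr hst)]

/-- No-crossing step: it's impossible that `x/dx < y/dy` while `y < x`. -/
lemma lqg_aux_cross {x y dx dy : ℝ} (hx : x ∈ Set.Ioo (0:ℝ) 2) (hy : y ∈ Set.Ioo (0:ℝ) 2)
    (hdx : 2 ≤ dx) (hdy : 2 ≤ dy) (hxi : x / dx < y / dy) (hyx : y < x)
    (hE : 1 - 2 / dx - x ^ 2 / (2 * dx) + x ^ 2 / (2 * dx ^ 2) ≤
      1 - 2 / dy - y ^ 2 / (2 * dy) + y ^ 2 / (2 * dy ^ 2)) : False := by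
  obtain ⟨hx0, hx2⟩ := hx
  obtain ⟨hy0, hy2⟩ := hy
  have hdx0 : (0:ℝ) < dx := by linarith
  have hdy0 : (0:ℝ) < dy := by linarith
  set s := x / dx with hs_def
  set t := y / dy with ht_def
  have hs0 : 0 < s := div_pos hx0 hdx0
  have hst : s < t := hxi
  have ht1 : t < 1 := by
    rw [ht_def, div_lt_one hdy0]; linarith
  set fx := 2 / x + x / 2 with hfx_def
  set fy := 2 / y + y / 2 with hfy_def
  have hfy2 : 2 ≤ fy := by
    rw [hfy_def, ← sub_nonneg]
    have : 2 / y + y / 2 - 2 = (y - 2) ^ 2 / (2 * y) := by field_simp; ring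
    rw [this]; positivity
  have hfxy : fx < fy := by
    rw [hfx_def, hfy_def, ← sub_pos]
    have : 2 / y + y / 2 - (2 / x + x / 2) = (x - y) * (4 - x * y) / (2 * x * y) := by
      field_simp; ring
    rw [this]
    apply div_pos
    · apply mul_pos (by linarith); nlinarith
    · positivity
  have hEx : 1 - 2 / dx - x ^ 2 / (2 * dx) + x ^ 2 / (2 * dx ^ 2)
      = 1 - s * fx + s ^ 2 / 2 := by
    rw [hs_def, hfx_def]; field_simp; ring
  have hEy : 1 - 2 / dy - y ^ 2 / (2 * dy) + y ^ 2 / (2 * dy ^ 2)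
      = 1 - t * fy + t ^ 2 / 2 := by
    rw [ht_def, hfy_def]; field_simp; ring
  rw [hEx, hEy] at hE
  exact lqg_aux_num hs0 hst ht1 hfy2 hfxy hE

/-- Proposition 1.6 in abstract form: under the consequences (i), (ii) of the LFPP
exponent relation, the function `γ ↦ γ/d(γ)` is strictly increasing on `(0,2)` and the
LFPP distance exponent `γ ↦ 1 - 2/d(γ) - γ²/(2d(γ)) + γ²/(2d(γ)²)` is nondecreasing. -/
theorem lqg_exponents_monotone (d : ℝ → ℝ)
    (hd2 : ∀ γ ∈ Set.Ioo (0:ℝ) 2, 2 ≤ d γ)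
    (himp : ∀ γ₁ ∈ Set.Ioo (0:ℝ) 2, ∀ γ₂ ∈ Set.Ioo (0:ℝ) 2,
      γ₁ / d γ₁ ≤ γ₂ / d γ₂ →
      1 - 2 / d γ₁ - γ₁ ^ 2 / (2 * d γ₁) + γ₁ ^ 2 / (2 * (d γ₁) ^ 2) ≤
        1 - 2 / d γ₂ - γ₂ ^ 2 / (2 * d γ₂) + γ₂ ^ 2 / (2 * (d γ₂) ^ 2))
    (heq : ∀ γ₁ ∈ Set.Ioo (0:ℝ) 2, ∀ γ₂ ∈ Set.Ioo (0:ℝ) 2,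
      γ₁ / d γ₁ = γ₂ / d γ₂ →
      1 - 2 / d γ₁ - γ₁ ^ 2 / (2 * d γ₁) = 1 - 2 / d γ₂ - γ₂ ^ 2 / (2 * d γ₂)) :
    StrictMonoOn (fun γ => γ / d γ) (Set.Ioo 0 2) ∧
      MonotoneOn (fun γ => 1 - 2 / d γ - γ ^ 2 / (2 * d γ) + γ ^ 2 / (2 * (d γ) ^ 2))
        (Set.Ioo 0 2) := by
  have hsm : StrictMonoOn (fun γ => γ / d γ) (Set.Ioo 0 2) := by
    intro a ha b hb hab
    simp only
    rcases lt_trichotomy (a / d a) (b / d b) with h | h | h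
    · exact h
    · exact absurd (lqg_aux_inj ha hb (hd2 a ha) (hd2 b hb) h
        (heq a ha b hb h)) (ne_of_lt hab)
    · exact absurd (lqg_aux_cross hb ha (hd2 b hb) (hd2 a ha) h hab
        (himp b hb a ha (le_of_lt h))) id
  refine ⟨hsm, ?_⟩
  intro a ha b hb hab
  simp only
  rcases eq_or_lt_of_le hab with rfl | hlt
  · exact le_rfl
  · exact himp a ha b hb (le_of_lt (hsm ha hb hlt))
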